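/- Let q, t, c ∈ ℂ with |q| < 1, |t| < 1 and |cq| < 1. Then ∑_{n=0}^∞ c^n · [ (t;q)_n − (t;q)_∞ ] = (t;q)_∞ · ∑_{n=1}^∞ t^n / ( (q;q)_n · (1 − cq^n) ). -/

import Mathlib

/-- Finite q-Pochhammer symbol `(x;q)_n = ∏_{k=0}^{n-1} (1 - x q^k)`. -/
noncomputable def qPoch (x q : ℂ) (n : ℕ) : ℂ := ∏ k ∈ Finset.range n, (1 - x * q ^ k)

/-- Infinite q-Pochhammer symbol `(x;q)_∞ = ∏_{k=0}^{∞} (1 - x q^k)`. -/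
noncomputable def qPochInf (x q : ℂ) : ℂ := ∏' k : ℕ, (1 - x * q ^ k)

/-- Gaussian binomial coefficient `[n k]_q`, equal to `0` for `k > n`. -/
noncomputable def gbinom (q : ℂ) (n k : ℕ) : ℂ :=
  if k ≤ n then qPoch q q n / (qPoch q q k * qPoch q q (n - k)) else 0

open Filter Complex Topology

set_option maxHeartbeats 1000000

lemma qPoch_succ (x q : ℂ) (n : ℕ) : qPoch x q (n + 1) = qPoch x q n * (1 - x * q ^ n) := by
  rw [qPoch, Finset.prod_range_succ]; rfl

lemma factor_ne_zero {q x : ℂ} (hq : ‖q‖ < 1) (hx : ‖x‖ < 1) (k : ℕ) : 1 - x * q ^ k ≠ 0 := by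
  intro h
  have h1 : (1 : ℂ) = x * q ^ k := sub_eq_zero.mp h
  have h2 : (1 : ℝ) = ‖x * q ^ k‖ := by rw [← h1]; simp
  have h3 : ‖x * q ^ k‖ ≤ ‖x‖ * 1 := by
    rw [norm_mul, norm_pow]
    exact mul_le_mul_of_nonneg_left (pow_le_one₀ (norm_nonneg q) hq.le) (norm_nonneg x)
  nlinarith [norm_nonneg x]

lemma qPoch_ne_zero {q x : ℂ} (hq : ‖q‖ < 1) (hx : ‖x‖ < 1) (n : ℕ) : qPoch x q n ≠ 0 :=
  Finset.prod_ne_zero_iff.mpr fun k _ => factor_ne_zero hq hx k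

lemma summable_log {q x : ℂ} (hq : ‖q‖ < 1) (hx : ‖x‖ < 1) :
    Summable fun k : ℕ => Complex.log (1 - x * q ^ k) := by
  apply Summable.of_norm_bounded_eventually_nat (g := fun k => 3 / 2 * (‖x‖ * ‖q‖ ^ k))
  · exact ((summable_geometric_of_lt_one (norm_nonneg q) hq).mul_left _).mul_left _
  · have h0 : Tendsto (fun k : ℕ => ‖x * q ^ k‖) atTop (𝓝 0) := by
      have := (tendsto_pow_atTop_nhds_zero_of_norm_lt_one hq).const_mul x
      simpa using this.norm
    filter_upwards [h0.eventually_le_const (by norm_num : (0:ℝ) < 1/2)] with k hk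
    have : ‖Complex.log (1 + -(x * q ^ k))‖ ≤ 3 / 2 * ‖-(x * q ^ k)‖ :=
      Complex.norm_log_one_add_half_le_self (by simpa using hk)
    simpa [sub_eq_add_neg, norm_mul, norm_pow, mul_assoc] using this

lemma multipliable_fac {q x : ℂ} (hq : ‖q‖ < 1) (hx : ‖x‖ < 1) :
    Multipliable fun k : ℕ => 1 - x * q ^ k :=
  Complex.multipliable_of_summable_log (summable_log hq hx)

lemma qPochInf_ne_zero {q x : ℂ} (hq : ‖q‖ < 1) (hx : ‖x‖ < 1) : qPochInf x q ≠ 0 := by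
  have := Complex.cexp_tsum_eq_tprod (f := fun k : ℕ => 1 - x * q ^ k)
    (fun k => factor_ne_zero hq hx k) (summable_log hq hx)
  rw [qPochInf, ← this]
  exact Complex.exp_ne_zero _

set_option maxHeartbeats 1000000 in
lemma tendsto_qPoch {q x : ℂ} (hq : ‖q‖ < 1) (hx : ‖x‖ < 1) :
    Tendsto (fun N => qPoch x q N) atTop (𝓝 (qPochInf x q)) :=
  (multipliable_fac hq hx).hasProd.tendsto_prod_nat

lemma qPochInf_split {q x : ℂ} (hq : ‖q‖ < 1) (hx : ‖x‖ < 1) (n : ℕ) :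
    qPochInf x q = qPoch x q n * qPochInf (x * q ^ n) q := by
  have hx' : ‖x * q ^ n‖ < 1 := by
    have h3 : ‖x * q ^ n‖ ≤ ‖x‖ * 1 := by
      rw [norm_mul, norm_pow]
      exact mul_le_mul_of_nonneg_left (pow_le_one₀ (norm_nonneg q) hq.le) (norm_nonneg x)
    nlinarith [norm_nonneg x]
  have hm : Multipliable (fun i : ℕ => 1 - x * q ^ (i + n)) :=
    (multipliable_fac hq hx').congr fun i => by rw [pow_add]; ring
  have h := Multipliable.prod_mul_tprod_nat_mul' (f := fun k : ℕ => 1 - x * q ^ k) (k := n) hm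
  rw [qPochInf, ← h, qPoch]
  congr 1
  exact tprod_congr fun i => by rw [pow_add]; ring

noncomputable def eulerF (q z : ℂ) : ℂ := ∑' m : ℕ, z ^ m / qPoch q q m

lemma summable_norm_eulerF {q z : ℂ} (hq : ‖q‖ < 1) (hz : ‖z‖ < 1) :
    Summable fun m : ℕ => ‖z ^ m / qPoch q q m‖ := by
  rcases eq_or_ne z 0 with rfl | hz0
  · apply summable_of_ne_finset_zero (s := {0})
    intro m hm
    have : m ≠ 0 := by simpa using hm
    simp [zero_pow this]
  · apply summable_of_ratio_test_tendsto_lt_one hz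
    · filter_upwards with m
      simp only [norm_ne_zero_iff]
      exact div_ne_zero (pow_ne_zero _ hz0) (qPoch_ne_zero hq hq m)
    · have hfun : (fun m : ℕ => ‖‖z ^ (m+1) / qPoch q q (m+1)‖‖ / ‖‖z ^ m / qPoch q q m‖‖)
          = fun m : ℕ => ‖z‖ / ‖1 - q * q ^ m‖ := by
        funext m
        have h1 : ‖z‖ ≠ 0 := norm_ne_zero_iff.mpr hz0
        have h2 : ‖qPoch q q m‖ ≠ 0 := norm_ne_zero_iff.mpr (qPoch_ne_zero hq hq m)
        have h3 : ‖1 - q * q ^ m‖ ≠ 0 := norm_ne_zero_iff.mpr (factor_ne_zero hq hq m)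
        rw [norm_norm, norm_norm, qPoch_succ, norm_div, norm_div, norm_mul, norm_pow,
          norm_pow, div_div_div_comm, pow_succ,
          mul_div_cancel_left₀ _ (pow_ne_zero m h1), mul_div_cancel_left₀ _ h2]
      rw [hfun]
      have h4 : Tendsto (fun m : ℕ => ‖1 - q * q ^ m‖) atTop (𝓝 1) := by
        have : Tendsto (fun m : ℕ => 1 - q * q ^ m) atTop (𝓝 (1 - q * 0)) :=
          tendsto_const_nhds.sub ((tendsto_pow_atTop_nhds_zero_of_norm_lt_one hq).const_mul q)
        simpa using this.norm
      have := (tendsto_const_nhds (x := ‖z‖) (f := atTop (α := ℕ))).div h4 one_ne_zero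
      simpa [Pi.div_def] using this

lemma summable_eulerF {q z : ℂ} (hq : ‖q‖ < 1) (hz : ‖z‖ < 1) :
    Summable fun m : ℕ => z ^ m / qPoch q q m :=
  (summable_norm_eulerF hq hz).of_norm

lemma eulerF_eq {q z : ℂ} (hq : ‖q‖ < 1) (hz : ‖z‖ < 1) :
    eulerF q z = 1 + ∑' m : ℕ, z ^ (m + 1) / qPoch q q (m + 1) := by
  rw [eulerF, Summable.tsum_eq_zero_add (summable_eulerF hq hz)]
  norm_num [qPoch]

lemma funcEq {q z : ℂ} (hq : ‖q‖ < 1) (hz : ‖z‖ < 1) :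
    (1 - z) * eulerF q z = eulerF q (q * z) := by
  have hqz : ‖q * z‖ < 1 := by
    rw [norm_mul]
    nlinarith [norm_nonneg q, norm_nonneg z]
  have hsum := summable_eulerF hq hz
  have hA : Summable (fun m : ℕ => z ^ (m + 1) / qPoch q q (m + 1)) :=
    (summable_nat_add_iff 1).mpr hsum
  have hB : Summable (fun m : ℕ => z ^ (m + 1) / qPoch q q m) := by
    refine (hsum.mul_left z).congr fun m => ?_
    rw [pow_succ]
    ring
  have hzf : z * eulerF q z = ∑' m : ℕ, z ^ (m + 1) / qPoch q q m := by
    rw [eulerF, ← tsum_mul_left]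
    exact tsum_congr fun m => by rw [pow_succ]; ring
  have key : ∀ m : ℕ, z ^ (m + 1) / qPoch q q (m + 1) - z ^ (m + 1) / qPoch q q m
      = (q * z) ^ (m + 1) / qPoch q q (m + 1) := by
    intro m
    have h2 : qPoch q q m ≠ 0 := qPoch_ne_zero hq hq m
    have h3 : (1 : ℂ) - q * q ^ m ≠ 0 := factor_ne_zero hq hq m
    rw [qPoch_succ]
    field_simp
    ring
  calc (1 - z) * eulerF q z = eulerF q z - z * eulerF q z := by ring
    _ = 1 + (∑' m : ℕ, z ^ (m + 1) / qPoch q q (m + 1))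
        - ∑' m : ℕ, z ^ (m + 1) / qPoch q q m := by rw [hzf, eulerF_eq hq hz]
    _ = 1 + ∑' m : ℕ, (z ^ (m + 1) / qPoch q q (m + 1) - z ^ (m + 1) / qPoch q q m) := by
        rw [Summable.tsum_sub hA hB]; ring
    _ = 1 + ∑' m : ℕ, (q * z) ^ (m + 1) / qPoch q q (m + 1) := by
        rw [tsum_congr key]
    _ = eulerF q (q * z) := (eulerF_eq hq hqz).symm

lemma iterEq {q z : ℂ} (hq : ‖q‖ < 1) (hz : ‖z‖ < 1) (N : ℕ) :
    qPoch z q N * eulerF q z = eulerF q (q ^ N * z) := by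
  induction N with
  | zero => simp [qPoch]
  | succ N ih =>
    have hqNz : ‖q ^ N * z‖ < 1 := by
      rw [norm_mul, norm_pow]
      nlinarith [(pow_le_one₀ (norm_nonneg q) hq.le : ‖q‖ ^ N ≤ 1), norm_nonneg z,
        pow_nonneg (norm_nonneg q) N]
    have h1 : eulerF q (q ^ (N + 1) * z) = (1 - q ^ N * z) * eulerF q (q ^ N * z) := by
      have h0 : q ^ (N + 1) * z = q * (q ^ N * z) := by rw [pow_succ]; ring
      rw [h0, ← funcEq hq hqNz]
    rw [h1, ← ih, qPoch_succ]
    ring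

lemma euler {q z : ℂ} (hq : ‖q‖ < 1) (hz : ‖z‖ < 1) :
    qPochInf z q * eulerF q z = 1 := by
  have h1 : Tendsto (fun N : ℕ => eulerF q (q ^ N * z)) atTop
      (𝓝 (qPochInf z q * eulerF q z)) := by
    refine Tendsto.congr (fun N => iterEq hq hz N) ?_
    exact (tendsto_qPoch hq hz).mul_const _
  have h2 : Tendsto (fun N : ℕ => eulerF q (q ^ N * z)) atTop (𝓝 1) := by
    have hlim : Tendsto (fun N : ℕ => ∑' m : ℕ, (q ^ N * z) ^ m / qPoch q q m) atTop
        (𝓝 (∑' m : ℕ, (0 : ℂ) ^ m / qPoch q q m)) := by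
      apply tendsto_tsum_of_dominated_convergence (summable_norm_eulerF hq hz)
      · intro m
        have := ((tendsto_pow_atTop_nhds_zero_of_norm_lt_one hq).mul_const z).pow m
          |>.div_const (qPoch q q m)
        simpa using this
      · filter_upwards with N m
        rw [norm_div, norm_div, norm_pow, norm_pow, norm_mul, norm_pow]
        gcongr
        nlinarith [(pow_le_one₀ (norm_nonneg q) hq.le : ‖q‖ ^ N ≤ 1), norm_nonneg z,
          pow_nonneg (norm_nonneg q) N]
    have hval : (∑' m : ℕ, (0 : ℂ) ^ m / qPoch q q m) = 1 := by
      rw [tsum_eq_single 0 (fun m hm => by simp [zero_pow hm])]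
      norm_num [qPoch]
    rw [hval] at hlim
    exact hlim
  exact tendsto_nhds_unique h1 h2

theorem stmt12 (q t c : ℂ) (hq : ‖q‖ < 1) (ht : ‖t‖ < 1)
    (hcq : ‖c * q‖ < 1) :
    ∑' n : ℕ, c ^ n * (qPoch t q n - qPochInf t q)
      = qPochInf t q * ∑' n : ℕ, t ^ (n + 1) /
          (qPoch q q (n + 1) * (1 - c * q ^ (n + 1))) := by
  have htq : ∀ n : ℕ, ‖t * q ^ n‖ < 1 := by
    intro n
    have h3 : ‖t * q ^ n‖ ≤ ‖t‖ * 1 := by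
      rw [norm_mul, norm_pow]
      exact mul_le_mul_of_nonneg_left (pow_le_one₀ (norm_nonneg q) hq.le) (norm_nonneg t)
    nlinarith [norm_nonneg t]
  have hcqm : ∀ m : ℕ, ‖c * q ^ (m + 1)‖ ≤ ‖c * q‖ := by
    intro m
    rw [norm_mul, norm_mul, norm_pow, pow_succ']
    nlinarith [(pow_le_one₀ (norm_nonneg q) hq.le : ‖q‖ ^ m ≤ 1), norm_nonneg c,
      norm_nonneg q, mul_nonneg (norm_nonneg c) (norm_nonneg q)]
  have key : ∀ n : ℕ, qPoch t q n - qPochInf t q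
      = qPochInf t q * ∑' m : ℕ, (t * q ^ n) ^ (m + 1) / qPoch q q (m + 1) := by
    intro n
    have h1 : qPoch t q n = qPochInf t q * eulerF q (t * q ^ n) := by
      rw [qPochInf_split hq ht n, mul_assoc, euler hq (htq n), mul_one]
    rw [h1, eulerF_eq hq (htq n)]
    ring
  have hstep1 : ∑' n : ℕ, c ^ n * (qPoch t q n - qPochInf t q)
      = qPochInf t q * ∑' (n : ℕ) (m : ℕ),
          (c * q ^ (m + 1)) ^ n * (t ^ (m + 1) / qPoch q q (m + 1)) := by
    rw [← tsum_mul_left]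
    refine tsum_congr fun n => ?_
    calc c ^ n * (qPoch t q n - qPochInf t q)
        = qPochInf t q * (c ^ n * ∑' m : ℕ, (t * q ^ n) ^ (m + 1) / qPoch q q (m + 1)) := by
          rw [key n]; ring
      _ = qPochInf t q * ∑' m : ℕ, c ^ n * ((t * q ^ n) ^ (m + 1) / qPoch q q (m + 1)) := by
          rw [tsum_mul_left]
      _ = qPochInf t q * ∑' m : ℕ, (c * q ^ (m + 1)) ^ n * (t ^ (m + 1) / qPoch q q (m + 1)) := by
          congr 1
          exact tsum_congr fun m => by ring
  have hu : Summable (Function.uncurry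
      (fun (n m : ℕ) => (c * q ^ (m + 1)) ^ n * (t ^ (m + 1) / qPoch q q (m + 1)))) := by
    apply Summable.of_norm_bounded
      (g := fun p : ℕ × ℕ => ‖(c * q) ^ p.1 * (t ^ (p.2 + 1) / qPoch q q (p.2 + 1))‖)
    · have hf : Summable fun n : ℕ => ‖(c * q) ^ n‖ := by
        simpa [norm_pow] using summable_geometric_of_lt_one (norm_nonneg (c * q)) hcq
      have hg : Summable fun m : ℕ => ‖t ^ (m + 1) / qPoch q q (m + 1)‖ :=
        (summable_nat_add_iff (f := fun m : ℕ => ‖t ^ m / qPoch q q m‖) 1).mpr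
          (summable_norm_eulerF hq ht)
      exact Summable.mul_norm (f := fun n : ℕ => (c * q) ^ n)
        (g := fun m : ℕ => t ^ (m + 1) / qPoch q q (m + 1)) hf hg
    · rintro ⟨n, m⟩
      show ‖(c * q ^ (m + 1)) ^ n * (t ^ (m + 1) / qPoch q q (m + 1))‖ ≤ _
      rw [norm_mul, norm_mul, norm_pow, norm_pow]
      exact mul_le_mul_of_nonneg_right
        (pow_le_pow_left₀ (norm_nonneg _) (hcqm m) n) (norm_nonneg _)
  have hswap := Summable.tsum_comm (f := fun (n m : ℕ) =>
    (c * q ^ (m + 1)) ^ n * (t ^ (m + 1) / qPoch q q (m + 1))) hu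
  have hinner : ∀ m : ℕ, (∑' n : ℕ, (c * q ^ (m + 1)) ^ n * (t ^ (m + 1) / qPoch q q (m + 1)))
      = t ^ (m + 1) / (qPoch q q (m + 1) * (1 - c * q ^ (m + 1))) := by
    intro m
    rw [tsum_mul_right, tsum_geometric_of_norm_lt_one (lt_of_le_of_lt (hcqm m) hcq),
      ← div_div, div_eq_mul_inv (t ^ (m + 1) / qPoch q q (m + 1))]
    exact (mul_comm _ _)
  rw [hstep1, ← hswap]
  congr 1
  exact tsum_congr hinner
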